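/- Let O be a complete discrete valuation ring with maximal ideal M, residue field K₁ and a fixed prime t₂, and let L ⊆ O be a subring mapping isomorphically onto a subfield L̄ of K₁. Suppose a ∈ O and for each m ≥ 1 there is u_m ∈ 1 + M^m·(units) such that conjugation by u_m⋯u₁·a centralizes L modulo M^{m+1}. Then the limit a' = lim (…(1+a₂t₂²)(1+a₁t₂)a) exists in O and centralizes L: a' x a'⁻¹ = x for all x ∈ L. -/
import Mathlib


/-- Successive approximation in a complete discrete valuation skew
field: let `K₂` be a division ring with additive valuation `v` (ring of integers
`O = {v ≥ 0}`, maximal ideal `M = {v ≥ 1}`) which is complete, `L` a subring of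
`O`, `a ∈ O` a unit of `O`, and `u_m ∈ 1 + M^{m+1}` units such that each partial
product `p_m = u_{m-1}⋯u_0·a` centralizes `L` modulo `M^{m+1}`. Then the limit
`a' = lim p_m` exists in `O` and centralizes `L` exactly: `a' x a'⁻¹ = x` for
all `x ∈ L`. -/
theorem successive_approximation_centralizer
    (K : Type*) [DivisionRing K]
    (v : AddValuation K (WithTop ℤ))
    (hcomplete : ∀ s : ℕ → K,
      (∀ m : ℕ, ((m : ℤ) : WithTop ℤ) ≤ v (s (m + 1) - s m)) →
      ∃ l : K, ∀ m : ℕ, ∃ N : ℕ, ∀ j ≥ N, ((m : ℤ) : WithTop ℤ) ≤ v (l - s j))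
    (L : Subring K) (hL : ∀ x ∈ L, 0 ≤ v x)
    (a : K) (ha : v a = 0)
    (u : ℕ → Kˣ)
    (hu : ∀ m : ℕ, (((m : ℤ) + 1) : WithTop ℤ) ≤ v ((u m : K) - 1))
    (p : ℕ → K) (hp0 : p 0 = a) (hpsucc : ∀ m, p (m + 1) = (u m : K) * p m)
    (hcent : ∀ m : ℕ, ∀ x ∈ L,
      (((m : ℤ) + 1) : WithTop ℤ) ≤ v (p m * x * (p m)⁻¹ - x)) :
    ∃ a' : K,
      (∀ m : ℕ, ∃ N : ℕ, ∀ j ≥ N, ((m : ℤ) : WithTop ℤ) ≤ v (a' - p j)) ∧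
      a' ≠ 0 ∧
      ∀ x ∈ L, a' * x * a'⁻¹ = x := by
  -- valuation of u m - 1 is positive
  have hupos : ∀ m : ℕ, (0 : WithTop ℤ) < v ((u m : K) - 1) := by
    intro m
    refine lt_of_lt_of_le ?_ (hu m)
    exact_mod_cast (by omega : (0:ℤ) < (m:ℤ) + 1)
  -- v (u m) = 0
  have hvu : ∀ m : ℕ, v (u m : K) = 0 := by
    intro m
    have h1 : v (1 : K) = 0 := v.map_one
    have hle : (0 : WithTop ℤ) ≤ v (u m : K) := by
      have := v.map_add ((u m : K) - 1) 1
      rw [sub_add_cancel] at this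
      refine le_trans ?_ this
      simp [h1, le_of_lt (hupos m)]
    have hge : v (u m : K) ≤ 0 := by
      have := v.map_sub (u m : K) ((u m : K) - 1)
      rw [sub_sub_cancel] at this
      rw [h1] at this
      rcases le_or_gt (v (u m : K)) (v ((u m : K) - 1)) with h | h
      · simpa [min_eq_left h] using this
      · exfalso
        rw [min_eq_right (le_of_lt h)] at this
        exact absurd (lt_of_lt_of_le (hupos m) this) (by simp)
    exact le_antisymm hge hle
  -- v (p m) = 0
  have hvp : ∀ m : ℕ, v (p m) = 0 := by
    intro m
    induction m with
    | zero => rw [hp0, ha]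
    | succ n ih => rw [hpsucc, v.map_mul, hvu, ih, add_zero]
  -- Cauchy
  have hcauchy : ∀ m : ℕ, ((m : ℤ) : WithTop ℤ) ≤ v (p (m + 1) - p m) := by
    intro m
    have : p (m + 1) - p m = ((u m : K) - 1) * p m := by
      rw [hpsucc, sub_mul, one_mul]
    rw [this, v.map_mul, hvp, add_zero]
    refine le_trans ?_ (hu m)
    exact_mod_cast (by omega : (m:ℤ) ≤ (m:ℤ) + 1)
  obtain ⟨a', ha'⟩ := hcomplete p hcauchy
  -- v a' = 0
  have hva' : v a' = 0 := by
    obtain ⟨N, hN⟩ := ha' 1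
    have h1 : ((1 : ℤ) : WithTop ℤ) ≤ v (a' - p N) := hN N le_rfl
    have hpos : (0 : WithTop ℤ) < v (a' - p N) := by
      refine lt_of_lt_of_le ?_ h1
      exact_mod_cast (by omega : (0:ℤ) < 1)
    have hle : (0 : WithTop ℤ) ≤ v a' := by
      have := v.map_add (a' - p N) (p N)
      rw [sub_add_cancel] at this
      refine le_trans ?_ this
      simp [hvp N, le_of_lt hpos]
    have hge : v a' ≤ 0 := by
      have := v.map_sub a' (a' - p N)
      rw [sub_sub_cancel] at this
      rw [hvp N] at this
      rcases le_or_gt (v a') (v (a' - p N)) with h | h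
      · simpa [min_eq_left h] using this
      · exfalso
        rw [min_eq_right (le_of_lt h)] at this
        exact absurd (lt_of_lt_of_le hpos this) (by simp)
    exact le_antisymm hge hle
  have ha'0 : a' ≠ 0 := by
    intro h
    rw [h, v.map_zero] at hva'
    exact absurd hva' (by simp)
  refine ⟨a', ha', ha'0, ?_⟩
  intro x hx
  -- show a' * x = x * a'
  have hcomm : a' * x = x * a' := by
    have key : ∀ m : ℕ, ((m : ℤ) : WithTop ℤ) ≤ v (a' * x - x * a') := by
      intro m
      obtain ⟨N, hN⟩ := ha' m
      set j := max N m with hj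
      have hjN : j ≥ N := le_max_left _ _
      have hjm : j ≥ m := le_max_right _ _
      have h1 : ((m : ℤ) : WithTop ℤ) ≤ v (a' - p j) := hN j hjN
      have hdecomp : a' * x - x * a' =
          ((a' - p j) * x - x * (a' - p j)) + (p j * x - x * p j) := by noncomm_ring
      have hA : ((m : ℤ) : WithTop ℤ) ≤ v ((a' - p j) * x) := by
        rw [v.map_mul]
        calc ((m : ℤ) : WithTop ℤ) = (m : ℤ) + 0 := by rw [add_zero]
        _ ≤ v (a' - p j) + v x := add_le_add h1 (hL x hx)
      have hB : ((m : ℤ) : WithTop ℤ) ≤ v (x * (a' - p j)) := by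
        rw [v.map_mul]
        calc ((m : ℤ) : WithTop ℤ) = 0 + (m : ℤ) := by rw [zero_add]
        _ ≤ v x + v (a' - p j) := add_le_add (hL x hx) h1
      have hC : ((m : ℤ) : WithTop ℤ) ≤ v (p j * x - x * p j) := by
        have hpj : p j ≠ 0 := by
          intro h
          have h0 := hvp j
          rw [h, v.map_zero] at h0
          exact absurd h0 (by simp)
        have heq : p j * x - x * p j = (p j * x * (p j)⁻¹ - x) * p j := by
          rw [sub_mul, mul_assoc (p j * x), inv_mul_cancel₀ hpj, mul_one]
        rw [heq, v.map_mul, hvp, add_zero]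
        refine le_trans ?_ (hcent j x hx)
        exact_mod_cast (by omega : (m:ℤ) ≤ (j:ℤ) + 1)
      rw [hdecomp]
      exact v.map_le_add (v.map_le_sub hA hB) hC
    have htop : v (a' * x - x * a') = ⊤ := by
      by_contra h
      obtain ⟨k, hk⟩ := WithTop.ne_top_iff_exists.mp h
      have := key (k.natAbs + 1)
      rw [← hk] at this
      have : ((k.natAbs : ℤ) + 1 : ℤ) ≤ k := by exact_mod_cast this
      omega
    have := v.top_iff.mp htop
    exact sub_eq_zero.mp this
  rw [hcomm, mul_assoc, mul_inv_cancel₀ ha'0, mul_one]
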